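/- If there exist an almost 2-perfect maximum 8-cycle packing of K_r with a 1-factor leave, an almost 2-perfect maximum 8-cycle packing of K_s with a 1-factor leave, and an almost 2-perfect 8-cycle decomposition of K_{r,s}, then there exists an almost 2-perfect 8-cycle packing of K_{r+s} whose leave is a 1-factor (perfect matching) of K_{r+s}. -/
import Mathlib


open Finset

set_option linter.unusedSectionVars false
set_option linter.unusedVariables false

/-- The edge set of the closed walk visiting `f 0, f 1, ..., f (m-1)` and back to `f 0`. -/
def cycleEdges {V : Type*} [DecidableEq V] (m : ℕ) (f : ℕ → V) : Finset (Sym2 V) :=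
  (Finset.range m).image (fun i => s(f i, f ((i + 1) % m)))

/-- `f` describes an `m`-cycle: its first `m` values are pairwise distinct. -/
def IsCycleMap {V : Type*} (m : ℕ) (f : ℕ → V) : Prop :=
  Set.InjOn f ↑(Finset.range m)

/-- Vertex set of the cycle described by `f`. -/
def cycleVerts {V : Type*} [DecidableEq V] (m : ℕ) (f : ℕ → V) : Finset V :=
  (Finset.range m).image f

/-- `g` is an inside `m`-cycle of `f`: same vertex set and edge-disjoint. -/
def IsInsideOf {V : Type*} [DecidableEq V] (m : ℕ) (g f : ℕ → V) : Prop :=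
  IsCycleMap m g ∧ cycleVerts m g = cycleVerts m f ∧
    Disjoint (cycleEdges m f) (cycleEdges m g)

/-- Edge set of the complete graph on `V`. -/
def kEdges (V : Type*) [Fintype V] [DecidableEq V] : Finset (Sym2 V) :=
  Finset.univ.filter (fun e => ¬ e.IsDiag)

/-- Edge set of the complete bipartite graph `K_{r,s}`. -/
def bipEdges (r s : ℕ) : Finset (Sym2 (Fin r ⊕ Fin s)) :=
  (Finset.univ : Finset (Fin r × Fin s)).image (fun p => s(Sum.inl p.1, Sum.inr p.2))

/-- `E` admits an almost 2-perfect 8-cycle decomposition. -/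
def HasA2PDecomp {V : Type*} [DecidableEq V] (E : Finset (Sym2 V)) : Prop :=
  ∃ (k : ℕ) (c c' : Fin k → ℕ → V),
    (∀ i, IsCycleMap 8 (c i)) ∧
    (∀ i j, i ≠ j → Disjoint (cycleEdges 8 (c i)) (cycleEdges 8 (c j))) ∧
    Finset.univ.sup (fun i => cycleEdges 8 (c i)) = E ∧
    (∀ i, IsInsideOf 8 (c' i) (c i)) ∧
    (∀ i j, i ≠ j → Disjoint (cycleEdges 8 (c' i)) (cycleEdges 8 (c' j))) ∧
    Finset.univ.sup (fun i => cycleEdges 8 (c' i)) = E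

/-- `E` admits an almost 2-perfect 8-cycle packing with leave `L`. -/
def HasA2PPacking {V : Type*} [DecidableEq V] (E L : Finset (Sym2 V)) : Prop :=
  L ⊆ E ∧ ∃ (k : ℕ) (c c' : Fin k → ℕ → V),
    (∀ i, IsCycleMap 8 (c i)) ∧
    (∀ i j, i ≠ j → Disjoint (cycleEdges 8 (c i)) (cycleEdges 8 (c j))) ∧
    Finset.univ.sup (fun i => cycleEdges 8 (c i)) = E \ L ∧
    (∀ i, IsInsideOf 8 (c' i) (c i)) ∧
    (∀ i j, i ≠ j → Disjoint (cycleEdges 8 (c' i)) (cycleEdges 8 (c' j))) ∧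
    Finset.univ.sup (fun i => cycleEdges 8 (c' i)) = E \ L

/-- A 1-factor (perfect matching) as a set of edges. -/
def IsOneFactor {V : Type*} (L : Finset (Sym2 V)) : Prop :=
  (∀ e ∈ L, ¬ e.IsDiag) ∧ ∀ v : V, ∃! e, e ∈ L ∧ v ∈ e

section Maps
variable {V W : Type*} [DecidableEq V] [DecidableEq W]

lemma cycleEdges_comp (m : ℕ) (φ : V → W) (f : ℕ → V) :
    cycleEdges m (φ ∘ f) = (cycleEdges m f).image (Sym2.map φ) := by
  simp [cycleEdges, Finset.image_image, Function.comp_def]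

lemma isCycleMap_comp {m : ℕ} {φ : V → W} {f : ℕ → V} (hφ : Function.Injective φ)
    (hf : IsCycleMap m f) : IsCycleMap m (φ ∘ f) :=
  fun x hx y hy h => hf hx hy (hφ h)

lemma cycleVerts_comp (m : ℕ) (φ : V → W) (f : ℕ → V) :
    cycleVerts m (φ ∘ f) = (cycleVerts m f).image φ := by
  simp [cycleVerts, Finset.image_image]

lemma isInsideOf_comp {φ : V → W} {g f : ℕ → V} (hφ : Function.Injective φ)
    (h : IsInsideOf 8 g f) : IsInsideOf 8 (φ ∘ g) (φ ∘ f) := by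
  obtain ⟨h1, h2, h3⟩ := h
  refine ⟨isCycleMap_comp hφ h1, by rw [cycleVerts_comp, cycleVerts_comp, h2], ?_⟩
  rw [cycleEdges_comp, cycleEdges_comp]
  exact (Finset.disjoint_image (Sym2.map.injective hφ)).mpr h3

lemma sup_image_eq {ι α β : Type*} [Fintype ι] [DecidableEq α] [DecidableEq β]
    (A : ι → Finset α) (g : α → β) :
    Finset.univ.sup (fun i => (A i).image g) = (Finset.univ.sup A).image g := by
  ext e
  simp only [Finset.mem_sup, Finset.mem_image, Finset.mem_univ, true_and]
  constructor
  · rintro ⟨i, a, ha, rfl⟩; exact ⟨a, ⟨i, ha⟩, rfl⟩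
  · rintro ⟨a, ⟨i, ha⟩, rfl⟩; exact ⟨i, a, ha, rfl⟩

lemma hasA2PPacking_image {E L : Finset (Sym2 V)} (φ : V → W) (hφ : Function.Injective φ)
    (h : HasA2PPacking E L) :
    HasA2PPacking (E.image (Sym2.map φ)) (L.image (Sym2.map φ)) := by
  obtain ⟨hLE, k, c, c', hc, hd, hs, hi, hd', hs'⟩ := h
  have hinj := Sym2.map.injective hφ
  refine ⟨Finset.image_subset_image hLE, k, fun i => φ ∘ c i, fun i => φ ∘ c' i,
    fun i => isCycleMap_comp hφ (hc i),
    fun i j hij => ?_, ?_, fun i => isInsideOf_comp hφ (hi i), fun i j hij => ?_, ?_⟩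
  · rw [cycleEdges_comp, cycleEdges_comp]
    exact (Finset.disjoint_image hinj).mpr (hd i j hij)
  · simp only [cycleEdges_comp]
    rw [sup_image_eq, hs, Finset.image_sdiff _ _ hinj]
  · rw [cycleEdges_comp, cycleEdges_comp]
    exact (Finset.disjoint_image hinj).mpr (hd' i j hij)
  · simp only [cycleEdges_comp]
    rw [sup_image_eq, hs', Finset.image_sdiff _ _ hinj]

lemma sup_sum {α β γ : Type*} [Fintype α] [Fintype β] [DecidableEq γ]
    (g : α ⊕ β → Finset γ) :
    Finset.univ.sup g = Finset.univ.sup (g ∘ Sum.inl) ⊔ Finset.univ.sup (g ∘ Sum.inr) := by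
  apply le_antisymm
  · refine Finset.sup_le fun i _ => ?_
    cases i with
    | inl a => exact le_sup_of_le_left (Finset.le_sup (f := g ∘ Sum.inl) (Finset.mem_univ a))
    | inr b => exact le_sup_of_le_right (Finset.le_sup (f := g ∘ Sum.inr) (Finset.mem_univ b))
  · exact sup_le (Finset.sup_le fun a _ => Finset.le_sup (f := g) (Finset.mem_univ (Sum.inl a)))
      (Finset.sup_le fun b _ => Finset.le_sup (f := g) (Finset.mem_univ (Sum.inr b)))

lemma sup_equiv' {ι κ α : Type*} [Fintype ι] [Fintype κ] [DecidableEq κ]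
    [SemilatticeSup α] [OrderBot α] (e : ι ≃ κ) (g : κ → α) :
    Finset.univ.sup (fun i : ι => g (e i)) = Finset.univ.sup g := by
  rw [show (fun i : ι => g (e i)) = g ∘ e from rfl, ← Finset.sup_image, Finset.image_univ_equiv]

lemma sdiff_union_sdiff' {α : Type*} [DecidableEq α] {E1 E2 L1 L2 : Finset α}
    (hE : Disjoint E1 E2) (h1 : L1 ⊆ E1) (h2 : L2 ⊆ E2) :
    (E1 ∪ E2) \ (L1 ∪ L2) = (E1 \ L1) ∪ (E2 \ L2) := by
  have hd := Finset.disjoint_left.mp hE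
  ext e
  simp only [Finset.mem_sdiff, Finset.mem_union]
  constructor
  · rintro ⟨h | h, hn⟩
    · exact Or.inl ⟨h, fun hl => hn (Or.inl hl)⟩
    · exact Or.inr ⟨h, fun hl => hn (Or.inr hl)⟩
  · rintro (⟨he, hn⟩ | ⟨he, hn⟩)
    · exact ⟨Or.inl he, by rintro (h | h); exacts [hn h, hd he (h2 h)]⟩
    · exact ⟨Or.inr he, by rintro (h | h); exacts [hd (h1 h) he, hn h]⟩

lemma hasA2PPacking_union {E1 E2 L1 L2 : Finset (Sym2 V)} (hE : Disjoint E1 E2)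
    (h1 : HasA2PPacking E1 L1) (h2 : HasA2PPacking E2 L2) :
    HasA2PPacking (E1 ∪ E2) (L1 ∪ L2) := by
  obtain ⟨hLE1, k1, c1, c1', hc1, hd1, hs1, hi1, hd1', hs1'⟩ := h1
  obtain ⟨hLE2, k2, c2, c2', hc2, hd2, hs2, hi2, hd2', hs2'⟩ := h2
  have hsd : (E1 ∪ E2) \ (L1 ∪ L2) = (E1 \ L1) ∪ (E2 \ L2) :=
    sdiff_union_sdiff' hE hLE1 hLE2
  have hE' : Disjoint (E1 \ L1) (E2 \ L2) :=
    hE.mono (Finset.sdiff_subset (s := E1) (t := L1)) (Finset.sdiff_subset (s := E2) (t := L2))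
  have hsub1 : ∀ i, cycleEdges 8 (c1 i) ⊆ E1 \ L1 := fun i => by
    rw [← hs1]; exact Finset.le_sup (f := fun i => cycleEdges 8 (c1 i)) (Finset.mem_univ i)
  have hsub2 : ∀ i, cycleEdges 8 (c2 i) ⊆ E2 \ L2 := fun i => by
    rw [← hs2]; exact Finset.le_sup (f := fun i => cycleEdges 8 (c2 i)) (Finset.mem_univ i)
  have hsub1' : ∀ i, cycleEdges 8 (c1' i) ⊆ E1 \ L1 := fun i => by
    rw [← hs1']; exact Finset.le_sup (f := fun i => cycleEdges 8 (c1' i)) (Finset.mem_univ i)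
  have hsub2' : ∀ i, cycleEdges 8 (c2' i) ⊆ E2 \ L2 := fun i => by
    rw [← hs2']; exact Finset.le_sup (f := fun i => cycleEdges 8 (c2' i)) (Finset.mem_univ i)
  refine ⟨Finset.union_subset_union hLE1 hLE2, k1 + k2,
    (fun i => Sum.elim c1 c2 (finSumFinEquiv.symm i)),
    (fun i => Sum.elim c1' c2' (finSumFinEquiv.symm i)), ?_, ?_, ?_, ?_, ?_, ?_⟩
  · intro i
    rcases h : finSumFinEquiv.symm i with a | b <;> simp only [h, Sum.elim_inl, Sum.elim_inr]
    exacts [hc1 a, hc2 b]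
  · intro i j hij
    have hij' : finSumFinEquiv.symm i ≠ finSumFinEquiv.symm j := fun h =>
      hij (finSumFinEquiv.symm.injective h)
    rcases hx : finSumFinEquiv.symm i with a | b <;> rcases hy : finSumFinEquiv.symm j with a' | b' <;>
      simp only [hx, hy, Sum.elim_inl, Sum.elim_inr]
    · exact hd1 a a' (by rintro rfl; exact hij' (hx.trans hy.symm))
    · exact hE'.mono (hsub1 a) (hsub2 b')
    · exact (hE'.mono (hsub1 a') (hsub2 b)).symm
    · exact hd2 b b' (by rintro rfl; exact hij' (hx.trans hy.symm))
  · rw [hsd, ← hs1, ← hs2]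
    rw [sup_equiv' finSumFinEquiv.symm (fun p => cycleEdges 8 (Sum.elim c1 c2 p)), sup_sum,
      Finset.sup_eq_union]
    congr 1 <;> exact Finset.sup_congr rfl fun i _ => rfl
  · intro i
    rcases h : finSumFinEquiv.symm i with a | b <;> simp only [h, Sum.elim_inl, Sum.elim_inr]
    exacts [hi1 a, hi2 b]
  · intro i j hij
    have hij' : finSumFinEquiv.symm i ≠ finSumFinEquiv.symm j := fun h =>
      hij (finSumFinEquiv.symm.injective h)
    rcases hx : finSumFinEquiv.symm i with a | b <;> rcases hy : finSumFinEquiv.symm j with a' | b' <;>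
      simp only [hx, hy, Sum.elim_inl, Sum.elim_inr]
    · exact hd1' a a' (by rintro rfl; exact hij' (hx.trans hy.symm))
    · exact hE'.mono (hsub1' a) (hsub2' b')
    · exact (hE'.mono (hsub1' a') (hsub2' b)).symm
    · exact hd2' b b' (by rintro rfl; exact hij' (hx.trans hy.symm))
  · rw [hsd, ← hs1', ← hs2']
    rw [sup_equiv' finSumFinEquiv.symm (fun p => cycleEdges 8 (Sum.elim c1' c2' p)), sup_sum,
      Finset.sup_eq_union]
    congr 1 <;> exact Finset.sup_congr rfl fun i _ => rfl

lemma decomp_packing {E : Finset (Sym2 V)} (h : HasA2PDecomp E) : HasA2PPacking E ∅ := by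
  obtain ⟨k, c, c', hc, hd, hs, hi, hd', hs'⟩ := h
  exact ⟨Finset.empty_subset _, k, c, c', hc, hd, by simpa using hs, hi, hd', by simpa using hs'⟩

end Maps

section Split
variable {r s : ℕ}

lemma mem_kEdges_mk {V : Type*} [Fintype V] [DecidableEq V] (x y : V) :
    s(x, y) ∈ kEdges V ↔ x ≠ y := by
  simp [kEdges]

lemma kEdges_sum (r s : ℕ) :
    kEdges (Fin r ⊕ Fin s) =
      (kEdges (Fin r)).image (Sym2.map Sum.inl) ∪ (kEdges (Fin s)).image (Sym2.map Sum.inr) ∪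
        bipEdges r s := by
  ext e
  induction e with
  | _ x y =>
    simp only [Finset.mem_union, Finset.mem_image, bipEdges, mem_kEdges_mk, Finset.mem_univ,
      true_and, Sym2.exists, Sym2.map_pair_eq, Sym2.eq_iff, Prod.exists]
    constructor
    · intro hxy
      rcases x with a | a <;> rcases y with b | b
      · exact Or.inl (Or.inl ⟨a, b, by simpa using hxy, Or.inl ⟨rfl, rfl⟩⟩)
      · exact Or.inr ⟨a, b, Or.inl ⟨rfl, rfl⟩⟩
      · exact Or.inr ⟨b, a, Or.inr ⟨rfl, rfl⟩⟩
      · exact Or.inl (Or.inr ⟨a, b, by simpa using hxy, Or.inl ⟨rfl, rfl⟩⟩)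
    · rintro ((⟨a, b, hab, (⟨rfl, rfl⟩ | ⟨rfl, rfl⟩)⟩ | ⟨a, b, hab, (⟨rfl, rfl⟩ | ⟨rfl, rfl⟩)⟩) |
        ⟨a, b, (⟨rfl, rfl⟩ | ⟨rfl, rfl⟩)⟩) <;> simp_all <;> exact fun h => hab h.symm

lemma disj_inl_inr : Disjoint ((kEdges (Fin r)).image (Sym2.map (Sum.inl : Fin r → Fin r ⊕ Fin s)))
    ((kEdges (Fin s)).image (Sym2.map Sum.inr)) := by
  rw [Finset.disjoint_left]
  rintro e he he'
  simp only [Finset.mem_image, Sym2.exists, Sym2.map_pair_eq] at he he'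
  obtain ⟨a, b, -, rfl⟩ := he
  obtain ⟨a', b', -, h⟩ := he'
  rw [Sym2.eq_iff] at h
  rcases h with ⟨h, -⟩ | ⟨h, -⟩ <;> exact Sum.inr_ne_inl h

lemma disj_union_bip :
    Disjoint ((kEdges (Fin r)).image (Sym2.map (Sum.inl : Fin r → Fin r ⊕ Fin s)) ∪
      (kEdges (Fin s)).image (Sym2.map Sum.inr)) (bipEdges r s) := by
  rw [Finset.disjoint_left]
  rintro e he he'
  simp only [Finset.mem_union, Finset.mem_image, Sym2.exists, Sym2.map_pair_eq] at he
  simp only [bipEdges, Finset.mem_image, Finset.mem_univ, true_and, Prod.exists] at he'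
  obtain ⟨a, b, h⟩ := he'
  rcases he with ⟨a', b', -, rfl⟩ | ⟨a', b', -, rfl⟩ <;> rw [Sym2.eq_iff] at h <;>
    rcases h with ⟨h1, h2⟩ | ⟨h1, h2⟩ <;> simp_all

end Split

section OneFactor
variable {V W : Type*} [DecidableEq V] [DecidableEq W]

lemma isOneFactor_image_equiv (φ : V ≃ W) {L : Finset (Sym2 V)} (h : IsOneFactor L) :
    IsOneFactor (L.image (Sym2.map φ)) := by
  obtain ⟨hnd, hu⟩ := h
  constructor
  · rintro e he hd
    simp only [Finset.mem_image] at he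
    obtain ⟨e', he', rfl⟩ := he
    exact hnd e' he' ((Sym2.isDiag_map φ.injective).mp hd)
  · intro w
    obtain ⟨e, ⟨heL, hve⟩, hun⟩ := hu (φ.symm w)
    refine ⟨Sym2.map φ e, ⟨Finset.mem_image_of_mem _ heL, ?_⟩, ?_⟩
    · exact Sym2.mem_map.mpr ⟨φ.symm w, hve, φ.apply_symm_apply w⟩
    · rintro f ⟨hf, hwf⟩
      simp only [Finset.mem_image] at hf
      obtain ⟨f', hf', rfl⟩ := hf
      have : φ.symm w ∈ f' := by
        obtain ⟨a, ha, haw⟩ := Sym2.mem_map.mp hwf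
        rwa [show φ.symm w = a from by rw [← haw, φ.symm_apply_apply]]
      rw [hun f' ⟨hf', this⟩]

lemma isOneFactor_sum {r s : ℕ} {L1 : Finset (Sym2 (Fin r))} {L2 : Finset (Sym2 (Fin s))}
    (h1 : IsOneFactor L1) (h2 : IsOneFactor L2) :
    IsOneFactor (L1.image (Sym2.map Sum.inl) ∪ L2.image (Sym2.map Sum.inr)) := by
  constructor
  · rintro e he hd
    simp only [Finset.mem_union, Finset.mem_image] at he
    rcases he with ⟨e', he', rfl⟩ | ⟨e', he', rfl⟩
    · exact h1.1 e' he' ((Sym2.isDiag_map Sum.inl_injective).mp hd)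
    · exact h2.1 e' he' ((Sym2.isDiag_map Sum.inr_injective).mp hd)
  · rintro (a | b)
    · obtain ⟨e, ⟨heL, hve⟩, hun⟩ := h1.2 a
      refine ⟨Sym2.map Sum.inl e, ⟨Finset.mem_union_left _ (Finset.mem_image_of_mem _ heL),
        Sym2.mem_map.mpr ⟨a, hve, rfl⟩⟩, ?_⟩
      rintro f ⟨hf, hwf⟩
      simp only [Finset.mem_union, Finset.mem_image] at hf
      rcases hf with ⟨f', hf', rfl⟩ | ⟨f', hf', rfl⟩
      · obtain ⟨x, hx, hxa⟩ := Sym2.mem_map.mp hwf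
        rw [hun f' ⟨hf', by rwa [Sum.inl_injective hxa] at hx⟩]
      · obtain ⟨x, -, hxa⟩ := Sym2.mem_map.mp hwf
        exact absurd hxa (Sum.inr_ne_inl)
    · obtain ⟨e, ⟨heL, hve⟩, hun⟩ := h2.2 b
      refine ⟨Sym2.map Sum.inr e, ⟨Finset.mem_union_right _ (Finset.mem_image_of_mem _ heL),
        Sym2.mem_map.mpr ⟨b, hve, rfl⟩⟩, ?_⟩
      rintro f ⟨hf, hwf⟩
      simp only [Finset.mem_union, Finset.mem_image] at hf
      rcases hf with ⟨f', hf', rfl⟩ | ⟨f', hf', rfl⟩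
      · obtain ⟨x, -, hxa⟩ := Sym2.mem_map.mp hwf
        exact absurd hxa (Sum.inl_ne_inr)
      · obtain ⟨x, hx, hxa⟩ := Sym2.mem_map.mp hwf
        rw [hun f' ⟨hf', by rwa [Sum.inr_injective hxa] at hx⟩]

lemma kEdges_image_equiv {V W : Type*} [Fintype V] [Fintype W] [DecidableEq V] [DecidableEq W]
    (φ : V ≃ W) : (kEdges V).image (Sym2.map φ) = kEdges W := by
  ext e
  have : e = Sym2.map φ (Sym2.map φ.symm e) := by
    rw [Sym2.map_map]
    simp
  rw [this]
  constructor
  · intro he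
    obtain ⟨e', he', heq⟩ := Finset.mem_image.mp he
    rw [← heq]
    simp only [kEdges, Finset.mem_filter, Finset.mem_univ, true_and] at he' ⊢
    exact fun hd => he' ((Sym2.isDiag_map φ.injective).mp hd)
  · intro he
    refine Finset.mem_image_of_mem _ ?_
    simp only [kEdges, Finset.mem_filter, Finset.mem_univ, true_and] at he ⊢
    exact fun hd => he (hd.map)

end OneFactor


/-- Combining A2P maximum packings of `K_r` and `K_s` with 1-factor leaves and an A2P
decomposition of `K_{r,s}` gives an A2P packing of `K_{r+s}` with a 1-factor leave. -/
theorem a2p_bipartite_glue (r s : ℕ)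
    (h1 : ∃ L : Finset (Sym2 (Fin r)), IsOneFactor L ∧ HasA2PPacking (kEdges (Fin r)) L)
    (h2 : ∃ L : Finset (Sym2 (Fin s)), IsOneFactor L ∧ HasA2PPacking (kEdges (Fin s)) L)
    (h3 : HasA2PDecomp (bipEdges r s)) :
    ∃ L : Finset (Sym2 (Fin (r + s))), IsOneFactor L ∧
      HasA2PPacking (kEdges (Fin (r + s))) L := by
  obtain ⟨L1, hL1, hP1⟩ := h1
  obtain ⟨L2, hL2, hP2⟩ := h2
  have p1 := hasA2PPacking_image (Sum.inl : Fin r → Fin r ⊕ Fin s) Sum.inl_injective hP1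
  have p2 := hasA2PPacking_image (Sum.inr : Fin s → Fin r ⊕ Fin s) Sum.inr_injective hP2
  have p12 := hasA2PPacking_union disj_inl_inr p1 p2
  have p123 := hasA2PPacking_union disj_union_bip p12 (decomp_packing h3)
  rw [Finset.union_empty, ← kEdges_sum] at p123
  have pfin := hasA2PPacking_image (finSumFinEquiv : Fin r ⊕ Fin s ≃ Fin (r + s))
    finSumFinEquiv.injective p123
  rw [kEdges_image_equiv finSumFinEquiv] at pfin
  exact ⟨_, isOneFactor_image_equiv finSumFinEquiv (isOneFactor_sum hL1 hL2), pfin⟩
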